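/- Hamel coefficients of the falling rolling disc: On the open set of ℝ⁵ with coordinates (φ, θ, ψ, x, y) where sin θ ≠ 0, let Ψ be the 5×5 matrix with rows (sin θ, 0, 0, 0, 0), (0, 1, 0, 0, 0), (cos θ, 0, 1, 0, 0), (0, 0, r cos φ, 1, 0), (0, 0, r sin φ, 0, 1), where r > 0 is a constant. Then Ψ is invertible with inverse Φ having rows (csc θ, 0, 0, 0, 0), (0, 1, 0, 0, 0), (−cot θ, 0, 1, 0, 0), (r cos φ cot θ, 0, −r cos φ, 1, 0), (r sin φ cot θ, 0, −r sin φ, 0, 1), and the nonzero Hamel coefficients γ^s_{pq} = (∂Ψ^s_i/∂q^j − ∂Ψ^s_j/∂q^i) Φ^i_p Φ^j_q are exactly γ¹₂₁ = −cot θ = −γ¹₁₂, γ³₂₁ = 1 = −γ³₁₂, γ⁴₁₃ = r sin φ csc θ = −γ⁴₃₁, and γ⁵₁₃ = −r cos φ csc θ = −γ⁵₃₁. -/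

import Mathlib

open Matrix Real

noncomputable section

/-- Partial derivative of `f : ℝ⁵ → ℝ` at `x` in the `j`-th coordinate direction. -/
def pder (f : (Fin 5 → ℝ) → ℝ) (x : Fin 5 → ℝ) (j : Fin 5) : ℝ :=
  fderiv ℝ f x (Pi.single j 1)

/-- Hamel coefficients `γ^s_{pq}(x) = (∂Ψ^s_i/∂x^j − ∂Ψ^s_j/∂x^i) Φ^i_p Φ^j_q`. -/
def hamel (Ψ Φ : (Fin 5 → ℝ) → Matrix (Fin 5) (Fin 5) ℝ)
    (x : Fin 5 → ℝ) (s p r : Fin 5) : ℝ :=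
  ∑ i, ∑ j, (pder (fun y => Ψ y s i) x j - pder (fun y => Ψ y s j) x i) * Φ x i p * Φ x j r

/-- The quasi-velocity transformation of the falling rolling disc,
in coordinates `q = (φ, θ, ψ, x, y)`. -/
def ΨD (r : ℝ) (q : Fin 5 → ℝ) : Matrix (Fin 5) (Fin 5) ℝ :=
  !![sin (q 1), 0, 0, 0, 0;
     0, 1, 0, 0, 0;
     cos (q 1), 0, 1, 0, 0;
     0, 0, r * cos (q 0), 1, 0;
     0, 0, r * sin (q 0), 0, 1]

/-- The claimed inverse transformation (`csc θ = 1/sin θ`, `cot θ = cos θ/sin θ`). -/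
def ΦD (r : ℝ) (q : Fin 5 → ℝ) : Matrix (Fin 5) (Fin 5) ℝ :=
  !![1 / sin (q 1), 0, 0, 0, 0;
     0, 1, 0, 0, 0;
     -(cos (q 1) / sin (q 1)), 0, 1, 0, 0;
     r * cos (q 0) * (cos (q 1) / sin (q 1)), 0, -(r * cos (q 0)), 1, 0;
     r * sin (q 0) * (cos (q 1) / sin (q 1)), 0, -(r * sin (q 0)), 0, 1]

lemma pder_const (c : ℝ) (x : Fin 5 → ℝ) (j : Fin 5) : pder (fun _ => c) x j = 0 := by
  simp [pder]

lemma pder_comp (f : ℝ → ℝ) (hf : Differentiable ℝ f) (k : Fin 5) (x : Fin 5 → ℝ) (j : Fin 5) :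
    pder (fun y => f (y k)) x j = if j = k then deriv f (x k) else 0 := by
  have h : pder (fun y => f (y k)) x j =
      fderiv ℝ (f ∘ (ContinuousLinearMap.proj k : (Fin 5 → ℝ) →L[ℝ] ℝ)) x (Pi.single j 1) := rfl
  rw [h, fderiv_comp x (hf _) (ContinuousLinearMap.proj k).differentiableAt,
    (ContinuousLinearMap.proj k : (Fin 5 → ℝ) →L[ℝ] ℝ).fderiv]
  rcases eq_or_ne j k with h' | h'
  · simp [h', fderiv_apply_one_eq_deriv]
  · simp [h', Pi.single_apply, Ne.symm h']

lemma pder_sin (x : Fin 5 → ℝ) (j : Fin 5) :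
    pder (fun y => sin (y 1)) x j = if j = 1 then cos (x 1) else 0 := by
  simpa using pder_comp sin differentiable_sin 1 x j

lemma pder_cos (x : Fin 5 → ℝ) (j : Fin 5) :
    pder (fun y => cos (y 1)) x j = if j = 1 then -sin (x 1) else 0 := by
  simpa using pder_comp cos differentiable_cos 1 x j

lemma pder_rcos (r : ℝ) (x : Fin 5 → ℝ) (j : Fin 5) :
    pder (fun y => r * cos (y 0)) x j = if j = 0 then -(r * sin (x 0)) else 0 := by
  have := pder_comp (fun t => r * cos t) (by fun_prop) 0 x j
  simp only [deriv_const_mul _ differentiable_cos.differentiableAt, Real.deriv_cos] at this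
  simpa [mul_comm] using this

lemma pder_rsin (r : ℝ) (x : Fin 5 → ℝ) (j : Fin 5) :
    pder (fun y => r * sin (y 0)) x j = if j = 0 then r * cos (x 0) else 0 := by
  have := pder_comp (fun t => r * sin t) (by fun_prop) 0 x j
  simp only [deriv_const_mul _ differentiable_sin.differentiableAt, Real.deriv_sin] at this
  simpa using this

lemma hamel0 (r : ℝ) (q : Fin 5 → ℝ) (p w : Fin 5) :
    hamel (ΨD r) (ΦD r) q 0 p w
      = cos (q 1) * (ΦD r q 0 p * ΦD r q 1 w - ΦD r q 1 p * ΦD r q 0 w) := by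
  simp [hamel, Fin.sum_univ_five, ΨD, pder_const, pder_sin, pder_cos, pder_rcos, pder_rsin]
  ring

lemma hamel1 (r : ℝ) (q : Fin 5 → ℝ) (p w : Fin 5) :
    hamel (ΨD r) (ΦD r) q 1 p w = 0 := by
  simp [hamel, Fin.sum_univ_five, ΨD, pder_const, pder_sin, pder_cos, pder_rcos, pder_rsin]

lemma hamel2 (r : ℝ) (q : Fin 5 → ℝ) (p w : Fin 5) :
    hamel (ΨD r) (ΦD r) q 2 p w
      = -sin (q 1) * (ΦD r q 0 p * ΦD r q 1 w - ΦD r q 1 p * ΦD r q 0 w) := by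
  simp [hamel, Fin.sum_univ_five, ΨD, pder_const, pder_sin, pder_cos, pder_rcos, pder_rsin]
  ring

lemma hamel3 (r : ℝ) (q : Fin 5 → ℝ) (p w : Fin 5) :
    hamel (ΨD r) (ΦD r) q 3 p w
      = -(r * sin (q 0)) * (ΦD r q 2 p * ΦD r q 0 w - ΦD r q 0 p * ΦD r q 2 w) := by
  simp [hamel, Fin.sum_univ_five, ΨD, pder_const, pder_sin, pder_cos, pder_rcos, pder_rsin]
  ring

lemma hamel4 (r : ℝ) (q : Fin 5 → ℝ) (p w : Fin 5) :
    hamel (ΨD r) (ΦD r) q 4 p w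
      = (r * cos (q 0)) * (ΦD r q 2 p * ΦD r q 0 w - ΦD r q 0 p * ΦD r q 2 w) := by
  simp [hamel, Fin.sum_univ_five, ΨD, pder_const, pder_sin, pder_cos, pder_rcos, pder_rsin]
  ring

set_option maxHeartbeats 4000000 in
/-- **Hamel coefficients of the falling rolling disc.**
On the set where `sin θ ≠ 0`, `ΦD` is the pointwise inverse of `ΨD`, and the nonzero
Hamel coefficients are exactly `γ¹₂₁ = −cot θ = −γ¹₁₂`, `γ³₂₁ = 1 = −γ³₁₂`,
`γ⁴₁₃ = r sin φ csc θ = −γ⁴₃₁`, `γ⁵₁₃ = −r cos φ csc θ = −γ⁵₃₁`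
(indices here are 0-based: e.g. `γ¹₂₁` is `hamel (ΨD r) (ΦD r) q 0 1 0`). -/
theorem falling_rolling_disc_hamel_coefficients (r : ℝ) (hr : 0 < r) :
    ∀ q : Fin 5 → ℝ, sin (q 1) ≠ 0 →
      (ΨD r q * ΦD r q = 1 ∧ ΦD r q * ΨD r q = 1) ∧
      (∀ s p w : Fin 5,
        hamel (ΨD r) (ΦD r) q s p w =
          if s = 0 ∧ p = 1 ∧ w = 0 then -(cos (q 1) / sin (q 1))
          else if s = 0 ∧ p = 0 ∧ w = 1 then cos (q 1) / sin (q 1)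
          else if s = 2 ∧ p = 1 ∧ w = 0 then 1
          else if s = 2 ∧ p = 0 ∧ w = 1 then -1
          else if s = 3 ∧ p = 0 ∧ w = 2 then r * sin (q 0) * (1 / sin (q 1))
          else if s = 3 ∧ p = 2 ∧ w = 0 then -(r * sin (q 0) * (1 / sin (q 1)))
          else if s = 4 ∧ p = 0 ∧ w = 2 then -(r * cos (q 0) * (1 / sin (q 1)))
          else if s = 4 ∧ p = 2 ∧ w = 0 then r * cos (q 0) * (1 / sin (q 1))
          else 0) := by
  intro q hs
  refine ⟨⟨?_, ?_⟩, ?_⟩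
  · ext i j
    fin_cases i <;> fin_cases j <;>
      simp [ΨD, ΦD, Matrix.mul_apply, Fin.sum_univ_five, Matrix.one_apply,
        Matrix.vecHead, Matrix.vecTail] <;>
      (try field_simp) <;> (try ring)
  · ext i j
    fin_cases i <;> fin_cases j <;>
      simp [ΨD, ΦD, Matrix.mul_apply, Fin.sum_univ_five, Matrix.one_apply,
        Matrix.vecHead, Matrix.vecTail] <;>
      (try field_simp) <;> (try ring)
  · intro s p w
    fin_cases s <;> simp only [Fin.zero_eta, Fin.mk_one, Fin.reduceFinMk]
    · rw [hamel0]
      fin_cases p <;> fin_cases w <;>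
        simp only [Fin.zero_eta, Fin.mk_one, Fin.reduceFinMk] <;>
        simp [ΦD] <;> (try field_simp) <;> (try ring)
    · rw [hamel1]
      fin_cases p <;> fin_cases w <;>
        simp only [Fin.zero_eta, Fin.mk_one, Fin.reduceFinMk] <;> simp
    · rw [hamel2]
      fin_cases p <;> fin_cases w <;>
        simp only [Fin.zero_eta, Fin.mk_one, Fin.reduceFinMk] <;>
        simp [ΦD] <;> (try field_simp) <;> (try ring)
    · rw [hamel3]
      fin_cases p <;> fin_cases w <;>
        simp only [Fin.zero_eta, Fin.mk_one, Fin.reduceFinMk] <;>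
        simp [ΦD] <;> (try field_simp) <;> (try ring) <;> (try simp)
    · rw [hamel4]
      fin_cases p <;> fin_cases w <;>
        simp only [Fin.zero_eta, Fin.mk_one, Fin.reduceFinMk] <;>
        simp [ΦD] <;> (try field_simp) <;> (try ring) <;> (try simp)

end
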